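/- Let B₃ = ⟨σ₁, σ₂ | σ₁σ₂σ₁ = σ₂σ₁σ₂⟩ be the braid group on three strands and C = (σ₁σ₂)³. Then every b ∈ B₃ is conjugate to a braid in exactly one of the following five families: (1) C^k σ₁^{p₁} σ₂^{−q₁} ⋯ σ₁^{p_s} σ₂^{−q_s}, where k ∈ ℤ and s and all p_i, q_i are positive integers; (2) C^k σ₁^{p}, where k, p ∈ ℤ; (3) C^k σ₁σ₂, where k ∈ ℤ; (4) C^k σ₁σ₂σ₁, where k ∈ ℤ; (5) C^k σ₁σ₂σ₁σ₂, where k ∈ ℤ. That is, b is conjugate to at least one element of some family, and b cannot be conjugate simultaneously to elements of two distinct families among (1)–(5). -/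

import Mathlib

/-- The single braid relation `σ₁σ₂σ₁ = σ₂σ₁σ₂` (as an element of the free group on two
generators), presenting the braid group `B₃`. -/
def braidRels : Set (FreeGroup (Fin 2)) :=
  {FreeGroup.of 0 * FreeGroup.of 1 * FreeGroup.of 0 *
    (FreeGroup.of 1 * FreeGroup.of 0 * FreeGroup.of 1)⁻¹}

/-- The braid group on three strands, `B₃ = ⟨σ₁, σ₂ ∣ σ₁σ₂σ₁ = σ₂σ₁σ₂⟩`. -/
abbrev BraidGroup3 := PresentedGroup braidRels

/-- The generator `σ₁` of `B₃`. -/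
def σ₁ : BraidGroup3 := PresentedGroup.of 0

/-- The generator `σ₂` of `B₃`. -/
def σ₂ : BraidGroup3 := PresentedGroup.of 1

/-- The central element `C = (σ₁σ₂)³` of `B₃`. -/
def Cbraid : BraidGroup3 := (σ₁ * σ₂) ^ 3

/-- The five families of Schreier's conjugacy normal form for 3-braids:
(0) generic braids `C^k σ₁^{p₁} σ₂^{-q₁} ⋯ σ₁^{p_s} σ₂^{-q_s}` with `s, pᵢ, qᵢ > 0`;
(1) `C^k σ₁^p` with `k, p ∈ ℤ`; (2) `C^k σ₁σ₂`; (3) `C^k σ₁σ₂σ₁`; (4) `C^k σ₁σ₂σ₁σ₂`. -/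
def SchreierForm : Fin 5 → BraidGroup3 → Prop
  | 0, b => ∃ (k : ℤ) (s : ℕ) (p q : ℕ → ℕ), 0 < s ∧ (∀ i < s, 0 < p i ∧ 0 < q i) ∧
      b = Cbraid ^ k *
        ((List.range s).map (fun i => σ₁ ^ (p i) * σ₂ ^ (-(q i : ℤ)))).prod
  | 1, b => ∃ k p : ℤ, b = Cbraid ^ k * σ₁ ^ p
  | 2, b => ∃ k : ℤ, b = Cbraid ^ k * (σ₁ * σ₂)
  | 3, b => ∃ k : ℤ, b = Cbraid ^ k * (σ₁ * σ₂ * σ₁)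
  | 4, b => ∃ k : ℤ, b = Cbraid ^ k * (σ₁ * σ₂ * σ₁ * σ₂)

/-- Schreier's theorem: every 3-braid is conjugate to a braid in exactly one of the five
families of the normal form. -/
lemma brel : σ₁ * σ₂ * σ₁ = σ₂ * σ₁ * σ₂ := by
  have h : (PresentedGroup.mk braidRels) (FreeGroup.of 0 * FreeGroup.of 1 * FreeGroup.of 0 *
      (FreeGroup.of 1 * FreeGroup.of 0 * FreeGroup.of 1)⁻¹) = 1 := by
    refine (QuotientGroup.eq_one_iff _).2 ?_
    exact Subgroup.subset_normalClosure rfl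
  simp only [map_mul, map_inv] at h
  simpa [σ₁, σ₂, PresentedGroup.of] using mul_inv_eq_one.mp h

noncomputable def Δ : BraidGroup3 := σ₁ * σ₂ * σ₁

lemma hD2 : Δ * Δ = Cbraid := by
  rw [Δ, Cbraid]
  calc σ₁ * σ₂ * σ₁ * (σ₁ * σ₂ * σ₁) = σ₁ * σ₂ * σ₁ * (σ₂ * σ₁ * σ₂) := by rw [brel]
  _ = (σ₁*σ₂)^3 := by rw [show ((σ₁*σ₂)^3 : BraidGroup3) = σ₁*σ₂*(σ₁*σ₂)*(σ₁*σ₂) from by rw [pow_succ, pow_succ, pow_one]]; group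

lemma hDs1 : Δ * σ₁ = σ₂ * Δ := by
  rw [Δ]; calc σ₁ * σ₂ * σ₁ * σ₁ = (σ₂ * σ₁ * σ₂) * σ₁ := by rw [brel]
  _ = σ₂ * (σ₁ * σ₂ * σ₁) := by group

lemma hDs2 : Δ * σ₂ = σ₁ * Δ := by
  rw [Δ]; calc σ₁ * σ₂ * σ₁ * σ₂ = σ₁ * (σ₂ * σ₁ * σ₂) := by group
  _ = σ₁ * (σ₁ * σ₂ * σ₁) := by rw [brel]
  _ = σ₁ * (σ₁ * σ₂ * σ₁) := rfl

lemma hCs1 : Cbraid * σ₁ = σ₁ * Cbraid := by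
  rw [← hD2]
  calc Δ * Δ * σ₁ = Δ * (σ₂ * Δ) := by rw [mul_assoc, hDs1]
  _ = σ₁ * (Δ * Δ) := by rw [← mul_assoc, hDs2, mul_assoc]

lemma hCs2 : Cbraid * σ₂ = σ₂ * Cbraid := by
  rw [← hD2]
  calc Δ * Δ * σ₂ = Δ * (σ₁ * Δ) := by rw [mul_assoc, hDs2]
  _ = σ₂ * (Δ * Δ) := by rw [← mul_assoc, hDs1, mul_assoc]

lemma Cb_central (x : BraidGroup3) : Cbraid * x = x * Cbraid := by
  have : (MulAut.conj Cbraid).toMonoidHom = MonoidHom.id BraidGroup3 := by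
    apply PresentedGroup.ext
    intro i
    fin_cases i
    · show Cbraid * σ₁ * Cbraid⁻¹ = σ₁
      rw [hCs1, mul_assoc, mul_inv_cancel, mul_one]
    · show Cbraid * σ₂ * Cbraid⁻¹ = σ₂
      rw [hCs2, mul_assoc, mul_inv_cancel, mul_one]
  have := congrArg (fun f => f x) this
  simp only [MulEquiv.toMonoidHom_eq_coe, MonoidHom.coe_coe, MulAut.conj_apply, MonoidHom.id_apply] at this
  calc Cbraid * x = Cbraid * x * Cbraid⁻¹ * Cbraid := by group
  _ = x * Cbraid := by rw [this]

-- new material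
lemma Ck_central (k : ℤ) (x : BraidGroup3) : Cbraid ^ k * x = x * Cbraid ^ k := by
  have h : Commute Cbraid x := Cb_central x
  exact (h.zpow_left k).eq

noncomputable def Dm (m : ℤ) : BraidGroup3 := σ₁ ^ m * Δ
noncomputable def W (L : List ℤ) : BraidGroup3 := (L.map Dm).prod

lemma W_nil : W [] = 1 := rfl
lemma W_cons (m : ℤ) (L : List ℤ) : W (m :: L) = Dm m * W L := by
  simp [W, List.prod_cons]
lemma W_append (L M : List ℤ) : W (L ++ M) = W L * W M := by
  simp [W, List.prod_append]

lemma s2_eq : σ₂ = σ₁⁻¹ * Δ * σ₁⁻¹ := by rw [Δ]; group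

lemma conjD (m : ℤ) : Δ * σ₁ ^ m * Δ⁻¹ = σ₂ ^ m := by
  have h : (MulAut.conj Δ) σ₁ = σ₂ := by
    simp only [MulAut.conj_apply]; rw [hDs1]; group
  calc Δ * σ₁ ^ m * Δ⁻¹ = (MulAut.conj Δ) (σ₁ ^ m) := by
        simp only [MulAut.conj_apply]
  _ = ((MulAut.conj Δ) σ₁) ^ m := by rw [map_zpow]
  _ = σ₂ ^ m := by rw [h]

lemma E1 (m : ℤ) : Δ * σ₁ ^ m * Δ = Cbraid * σ₂ ^ m := by
  calc Δ * σ₁ ^ m * Δ = (Δ * σ₁ ^ m * Δ⁻¹) * (Δ * Δ) := by group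
  _ = σ₂ ^ m * Cbraid := by rw [conjD, hD2]
  _ = Cbraid * σ₂ ^ m := (Cb_central (σ₂ ^ m)).symm

lemma E5 : σ₁ * Δ * σ₁ = Δ * σ₁⁻¹ * Δ := by
  have h := congrArg (fun z => σ₁ * z * σ₁) brel
  rw [Δ]
  calc σ₁ * (σ₁ * σ₂ * σ₁) * σ₁ = σ₁ * (σ₂ * σ₁ * σ₂) * σ₁ := by
        rw [show σ₁ * (σ₁ * σ₂ * σ₁) * σ₁ = σ₁ * (σ₁ * σ₂ * σ₁) * σ₁ from rfl]; exact h
  _ = σ₁ * σ₂ * σ₁ * σ₁⁻¹ * (σ₁ * σ₂ * σ₁) := by group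

lemma Cinv_central (x : BraidGroup3) : Cbraid⁻¹ * x = x * Cbraid⁻¹ := by
  have := Ck_central (-1) x; simpa [zpow_neg, zpow_one] using this

lemma Cn_central (n : ℕ) (x : BraidGroup3) : Cbraid ^ n * x = x * Cbraid ^ n := by
  have h : Commute Cbraid x := Cb_central x
  exact (h.pow_left n).eq

lemma zs1 (a : ℤ) : σ₁ ^ a = σ₁ ^ (a-1) * σ₁ := by rw [zpow_sub_one]; group
lemma zs2 (a : ℤ) : σ₁ ^ a = σ₁ ^ (a+1) * σ₁⁻¹ := by rw [zpow_add_one]; group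

lemma h1C : σ₂ = Cbraid⁻¹ * (Δ * σ₁ * Δ) := by
  have := E1 1
  rw [zpow_one] at this
  rw [this]; group

lemma Pplus (a m : ℤ) : Dm a * Dm m = Dm (a-1) * Dm (-1) * Dm (m-1) := by
  simp only [Dm]
  calc σ₁^a*Δ*(σ₁^m*Δ) = σ₁^(a-1)*(σ₁*Δ*σ₁)*(σ₁^(m-1)*Δ) := by group
  _ = σ₁^(a-1)*(Δ*σ₁⁻¹*Δ)*(σ₁^(m-1)*Δ) := by rw [E5]
  _ = σ₁ ^ (a - 1) * Δ * (σ₁ ^ (-1:ℤ) * Δ) * (σ₁ ^ (m - 1) * Δ) := by group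

lemma Pminus (a m : ℤ) : Dm a * Dm m = Cbraid⁻¹ * (Dm (a+1) * Dm 1 * Dm (m+1)) := by
  simp only [Dm]
  calc σ₁^a*Δ*(σ₁^m*Δ) = σ₁^(a+1)*(σ₁⁻¹*Δ*σ₁⁻¹)*(σ₁^(m+1)*Δ) := by group
  _ = σ₁^(a+1)*σ₂*(σ₁^(m+1)*Δ) := by rw [← s2_eq]
  _ = σ₁^(a+1)*(Cbraid⁻¹ * (Δ * σ₁ * Δ))*(σ₁^(m+1)*Δ) := by rw [← h1C]
  _ = Cbraid⁻¹ * (σ₁^(a+1)*(Δ * σ₁ * Δ)*(σ₁^(m+1)*Δ)) := by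
        rw [show σ₁^(a+1)*(Cbraid⁻¹ * (Δ * σ₁ * Δ))*(σ₁^(m+1)*Δ)
            = σ₁^(a+1)*Cbraid⁻¹ * ((Δ * σ₁ * Δ)*(σ₁^(m+1)*Δ)) from by group,
           ← Cinv_central]
        group
  _ = Cbraid⁻¹ * (σ₁ ^ (a + 1) * Δ * (σ₁ ^ (1:ℤ) * Δ) * (σ₁ ^ (m + 1) * Δ)) := by group

lemma Zmove (a : ℤ) : Dm a * Dm 0 = Cbraid * σ₁ ^ a := by
  simp only [Dm, zpow_zero, one_mul]
  calc σ₁^a*Δ*Δ = σ₁^a*(Δ*Δ) := by group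
  _ = σ₁^a*Cbraid := by rw [hD2]
  _ = Cbraid * σ₁^a := (Cb_central _).symm

lemma M6a (m : ℤ) : σ₁⁻¹ * Dm m * σ₁ = Dm (m-2) * Dm (-1) := by
  simp only [Dm]
  calc σ₁⁻¹ * (σ₁^m*Δ) * σ₁ = σ₁^(m-2)*(σ₁*Δ*σ₁) := by group
  _ = σ₁^(m-2)*(Δ*σ₁⁻¹*Δ) := by rw [E5]
  _ = σ₁ ^ (m - 2) * Δ * (σ₁ ^ (-1:ℤ) * Δ) := by group

lemma M6b (m : ℤ) : σ₁ * Dm m * σ₁⁻¹ = Cbraid⁻¹ * (Dm (m+2) * Dm 1) := by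
  simp only [Dm]
  calc σ₁ * (σ₁^m*Δ) * σ₁⁻¹ = σ₁^(m+2)*(σ₁⁻¹*Δ*σ₁⁻¹) := by group
  _ = σ₁^(m+2)*σ₂ := by rw [← s2_eq]
  _ = σ₁^(m+2)*(Cbraid⁻¹ * (Δ * σ₁ * Δ)) := by rw [← h1C]
  _ = Cbraid⁻¹ * (σ₁ ^ (m + 2) * Δ * (σ₁ ^ (1:ℤ) * Δ)) := by
        rw [show σ₁^(m+2)*(Cbraid⁻¹ * (Δ * σ₁ * Δ)) = σ₁^(m+2)*Cbraid⁻¹ * (Δ * σ₁ * Δ) from by group,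
           ← Cinv_central]
        group

lemma I7W (p q : ℤ) : Dm p * Dm (-q) = Cbraid * (σ₁ ^ p * σ₂ ^ (-q)) := by
  simp only [Dm]
  calc σ₁^p*Δ*(σ₁^(-q)*Δ) = σ₁^p*(Δ*σ₁^(-q)*Δ) := by group
  _ = σ₁^p*(Cbraid * σ₂^(-q)) := by rw [E1]
  _ = Cbraid * (σ₁ ^ p * σ₂ ^ (-q)) := by
        rw [show σ₁^p*(Cbraid * σ₂^(-q)) = σ₁^p*Cbraid * σ₂^(-q) from by group, ← Cb_central]
        group

lemma merge (n m : ℤ) (L : List ℤ) : σ₁ ^ n * W (m::L) = W ((n+m)::L) := by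
  rw [W_cons, W_cons]
  simp only [Dm]
  rw [zpow_add]; group

/-- Normal-form property: conjugate to some family. -/
def NF0 (b : BraidGroup3) : Prop := ∃ i c, SchreierForm i c ∧ IsConj b c

lemma nf_conj {b b' : BraidGroup3} (h : IsConj b b') (h2 : NF0 b') : NF0 b := by
  obtain ⟨i, c, hc, hcj⟩ := h2
  exact ⟨i, c, hc, h.trans hcj⟩

lemma schreier_absorb (j : ℤ) {i : Fin 5} {c : BraidGroup3} (h : SchreierForm i c) :
    SchreierForm i (Cbraid ^ j * c) := by
  fin_cases i
  · obtain ⟨k, s, p, q, hs, hpq, hc⟩ := h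
    exact ⟨j + k, s, p, q, hs, hpq, by rw [hc, zpow_add]; group⟩
  · obtain ⟨k, p, hc⟩ := h
    exact ⟨j + k, p, by rw [hc, zpow_add]; group⟩
  · obtain ⟨k, hc⟩ := h
    exact ⟨j + k, by rw [hc, zpow_add]; group⟩
  · obtain ⟨k, hc⟩ := h
    exact ⟨j + k, by rw [hc, zpow_add]; group⟩
  · obtain ⟨k, hc⟩ := h
    exact ⟨j + k, by rw [hc, zpow_add]; group⟩

lemma nf_C (j : ℤ) {b : BraidGroup3} (h : NF0 b) : NF0 (Cbraid ^ j * b) := by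
  obtain ⟨i, c, hc, hcj⟩ := h
  obtain ⟨g, hg⟩ := isConj_iff.mp hcj
  refine ⟨i, Cbraid ^ j * c, schreier_absorb j hc, isConj_iff.mpr ⟨g, ?_⟩⟩
  calc g * (Cbraid ^ j * b) * g⁻¹ = Cbraid ^ j * (g * b * g⁻¹) := by
        rw [show g * (Cbraid ^ j * b) * g⁻¹ = g * Cbraid ^ j * (b * g⁻¹) from by group,
          ← Ck_central]
        group
  _ = Cbraid ^ j * c := by rw [hg]

lemma nf_C_iff (j : ℤ) {b : BraidGroup3} : NF0 (Cbraid ^ j * b) ↔ NF0 b := by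
  constructor
  · intro h
    have := nf_C (-j) h
    rwa [show Cbraid ^ (-j) * (Cbraid ^ j * b) = b from by rw [zpow_neg]; group] at this
  · exact nf_C j

lemma conj_cyc (j : ℤ) (x y : BraidGroup3) :
    IsConj (Cbraid ^ j * (x * y)) (Cbraid ^ j * (y * x)) := by
  refine isConj_iff.mpr ⟨y, ?_⟩
  rw [show y * (Cbraid ^ j * (x * y)) * y⁻¹ = y * Cbraid ^ j * (x * (y * y⁻¹)) from by group,
    ← Ck_central]
  group

/-- single cyclic rotation -/
def rot1 : List ℤ → List ℤ
  | [] => []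
  | a :: t => t ++ [a]

lemma rot1_conj (k : ℤ) (L : List ℤ) :
    IsConj (Cbraid ^ k * W L) (Cbraid ^ k * W (rot1 L)) := by
  cases L with
  | nil => exact IsConj.refl _
  | cons a t =>
      have := conj_cyc k (Dm a) (W t)
      rw [← W_cons] at this
      rw [show rot1 (a::t) = t ++ [a] from rfl, W_append]
      simpa [W_cons, W_nil] using this

lemma rotj_conj (k : ℤ) (L : List ℤ) (j : ℕ) :
    IsConj (Cbraid ^ k * W L) (Cbraid ^ k * W (rot1^[j] L)) := by
  induction j with
  | zero => exact IsConj.refl _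
  | succ n ih =>
      rw [Function.iterate_succ_apply']
      exact ih.trans (rot1_conj k _)

/-- measure -/
def meas (L : List ℤ) : ℕ := 2 * (L.map Int.natAbs).sum + L.length

lemma meas_rot1 (L : List ℤ) : meas (rot1 L) = meas L := by
  cases L with
  | nil => rfl
  | cons a t => simp [meas, rot1, List.sum_append]; omega

lemma meas_rotj (L : List ℤ) (j : ℕ) : meas (rot1^[j] L) = meas L := by
  induction j with
  | zero => rfl
  | succ n ih => rw [Function.iterate_succ_apply', meas_rot1]; exact ih

lemma mem_rot1 {x : ℤ} {L : List ℤ} (h : x ∈ rot1 L) : x ∈ L := by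
  cases L with
  | nil => simpa [rot1] using h
  | cons a t =>
      simp only [rot1, List.mem_append, List.mem_singleton, List.mem_cons] at h ⊢
      tauto

lemma mem_rotj {x : ℤ} {L : List ℤ} (j : ℕ) (h : x ∈ rot1^[j] L) : x ∈ L := by
  induction j generalizing x with
  | zero => exact h
  | succ n ih =>
      rw [Function.iterate_succ_apply'] at h
      exact ih (mem_rot1 h)

lemma exists_rot (A : List ℤ) (x : ℤ) (B : List ℤ) :
    ∃ j, rot1^[j] (A ++ x :: B) = x :: (B ++ A) := by
  induction A generalizing B with
  | nil => exact ⟨0, by simp⟩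
  | cons a A' ih =>
      obtain ⟨j, hj⟩ := ih (B ++ [a])
      refine ⟨j + 1, ?_⟩
      rw [Function.iterate_add_apply]
      have h1 : rot1^[1] ((a :: A') ++ x :: B) = A' ++ x :: (B ++ [a]) := by
        simp [rot1]
      rw [h1, hj]
      simp

lemma fam1_nf (k p : ℤ) : NF0 (Cbraid ^ k * σ₁ ^ p) :=
  ⟨1, Cbraid ^ k * σ₁ ^ p, ⟨k, p, rfl⟩, IsConj.refl _⟩

lemma fam3_nf (k : ℤ) : NF0 (Cbraid ^ k * W [0]) := by
  have h : W [0] = σ₁ * σ₂ * σ₁ := by simp [W, Dm, Δ]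
  exact ⟨3, Cbraid ^ k * (σ₁ * σ₂ * σ₁), ⟨k, rfl⟩, by rw [h]⟩

lemma fam4_nf (k : ℤ) : NF0 (Cbraid ^ k * W [1]) := by
  have h : W [1] = σ₁ * σ₂ * σ₁ * σ₂ := by
    have : W [1] = σ₁ * Δ := by simp [W, Dm]
    rw [this, ← hDs2, Δ]
  exact ⟨4, Cbraid ^ k * (σ₁ * σ₂ * σ₁ * σ₂), ⟨k, rfl⟩, by rw [h]⟩

lemma fam2_nf (k : ℤ) : NF0 (Cbraid ^ k * W [-1]) := by
  have h : W [-1] = σ₂ * σ₁ := by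
    have : W [-1] = σ₁⁻¹ * Δ := by simp [W, Dm]
    rw [this, Δ]; group
  refine ⟨2, Cbraid ^ k * (σ₁ * σ₂), ⟨k, rfl⟩, ?_⟩
  rw [h]
  exact conj_cyc k σ₂ σ₁

/-- product form for family 0 -/
noncomputable def Pform (pl : List (ℕ × ℕ)) : BraidGroup3 :=
  (pl.map (fun pq => σ₁ ^ pq.1 * σ₂ ^ (-(pq.2 : ℤ)))).prod

noncomputable def flat (pl : List (ℕ × ℕ)) : List ℤ :=
  pl.flatMap (fun pq => [(pq.1 : ℤ), -(pq.2 : ℤ)])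

lemma W_flat (pl : List (ℕ × ℕ)) :
    W (flat pl) = Cbraid ^ (pl.length : ℕ) * Pform pl := by
  induction pl with
  | nil => simp [flat, W_nil, Pform]
  | cons pq rest ih =>
      have hf : flat (pq :: rest) = (pq.1 : ℤ) :: (-(pq.2 : ℤ)) :: flat rest := by
        simp [flat]
      rw [hf, W_cons, W_cons, ← mul_assoc, I7W, ih]
      have hp : Pform (pq :: rest) = (σ₁ ^ pq.1 * σ₂ ^ (-(pq.2 : ℤ))) * Pform rest := by
        simp [Pform]
      rw [hp]
      have hz : (σ₁ : BraidGroup3) ^ (pq.1 : ℤ) = σ₁ ^ pq.1 := zpow_natCast _ _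
      rw [hz]
      rw [show Cbraid * (σ₁ ^ pq.1 * σ₂ ^ (-(pq.2:ℤ))) * (Cbraid ^ rest.length * Pform rest)
          = Cbraid * ((σ₁ ^ pq.1 * σ₂ ^ (-(pq.2:ℤ))) * Cbraid ^ rest.length) * Pform rest from by
            group,
        ← Cn_central, show (pq :: rest).length = rest.length + 1 from rfl, pow_succ]
      group

lemma range_getD {α β : Type*} (pl : List α) (d : α) (f : α → β) :
    (List.range pl.length).map (fun i => f (pl.getD i d)) = pl.map f := by
  induction pl with
  | nil => simp
  | cons a t ih =>
      rw [show (a :: t).length = t.length + 1 from rfl, List.range_succ_eq_map]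
      simp only [List.map_cons, List.getD_cons_zero, List.map_map]
      rw [show ((fun i => f ((a :: t).getD i d)) ∘ Nat.succ) = (fun i => f (t.getD i d)) from by
        funext i; simp [List.getD_cons_succ]]
      rw [ih]

lemma fam0_nf (k : ℤ) (pl : List (ℕ × ℕ)) (hne : pl ≠ [])
    (hpos : ∀ pq ∈ pl, 0 < pq.1 ∧ 0 < pq.2) : NF0 (Cbraid ^ k * W (flat pl)) := by
  refine ⟨0, Cbraid ^ k * W (flat pl), ?_, IsConj.refl _⟩
  refine ⟨k + pl.length, pl.length, fun i => (pl.getD i (1,1)).1, fun i => (pl.getD i (1,1)).2,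
    List.length_pos_iff.mpr hne, ?_, ?_⟩
  · intro i hi
    simp only []
    rw [List.getD_eq_getElem pl (1,1) hi]
    exact hpos _ (List.getElem_mem hi)
  · rw [W_flat, zpow_add, zpow_natCast]
    rw [show ((List.range pl.length).map
          (fun i => σ₁ ^ (pl.getD i (1,1)).1 * σ₂ ^ (-(((pl.getD i (1,1)).2 : ℕ) : ℤ)))).prod
        = Pform pl from by
      rw [show (fun i => σ₁ ^ (pl.getD i (1,1)).1 * σ₂ ^ (-(((pl.getD i (1,1)).2 : ℕ) : ℤ)))
          = (fun i => (fun pq : ℕ × ℕ => σ₁ ^ pq.1 * σ₂ ^ (-(pq.2 : ℤ))) (pl.getD i (1,1))) from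
        rfl]
      rw [range_getD pl (1,1) (fun pq : ℕ × ℕ => σ₁ ^ pq.1 * σ₂ ^ (-(pq.2 : ℤ)))]
      rfl]
    group

lemma neg_of_mul_neg_left' {a b : ℤ} (h : a * b < 0) (ha : 0 < a) : b < 0 := by
  nlinarith

lemma pos_of_mul_neg_left' {a b : ℤ} (h : a * b < 0) (ha : a < 0) : 0 < b := by
  nlinarith

lemma ALT : ∀ (n : ℕ) (L : List ℤ), L.length ≤ n → ∀ (h : ℤ) (T : List ℤ), L = h :: T → 0 < h →
    (∀ A a m B, L = A ++ a :: m :: B → a * m < 0) →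
    (∀ x, L.getLast? = some x → x < 0) →
    ∃ pl : List (ℕ × ℕ), pl ≠ [] ∧ (∀ pq ∈ pl, 0 < pq.1 ∧ 0 < pq.2) ∧ L = flat pl := by
  intro n
  induction n with
  | zero => intro L hlen h T hL; subst hL; simp at hlen
  | succ n ih =>
      intro L hlen h T hL hh hadj hl
      subst hL
      cases T with
      | nil =>
          exfalso
          have := hl h (by simp)
          omega
      | cons q rest =>
          have hq : q < 0 := neg_of_mul_neg_left' (hadj [] h q rest (by simp)) hh
          cases rest with
          | nil =>
              refine ⟨[(h.toNat, q.natAbs)], by simp, ?_, ?_⟩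
              · intro pq hpq
                simp only [List.mem_singleton] at hpq
                subst hpq
                exact ⟨by omega, by omega⟩
              · simp only [flat, List.flatMap_cons, List.flatMap_nil, List.append_nil]
                have e1 : (h.toNat : ℤ) = h := by omega
                have e2 : (-(q.natAbs : ℤ)) = q := by omega
                rw [e1, e2]
          | cons r rest' =>
              have hr : 0 < r := pos_of_mul_neg_left' (hadj [h] q r rest' (by simp)) hq
              obtain ⟨pl', hne', hpos', hfl'⟩ :=
                ih (r :: rest') (by simp at hlen ⊢; omega) r rest' rfl hr
                  (fun A a m B hEq => hadj (h :: q :: A) a m B (by simp [hEq]))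
                  (fun x hx => hl x (by
                    rw [List.getLast?_cons_cons, List.getLast?_cons_cons]; exact hx))
              refine ⟨(h.toNat, q.natAbs) :: pl', by simp, ?_, ?_⟩
              · intro pq hpq
                rcases List.mem_cons.mp hpq with h1 | h1
                · subst h1; simp; omega
                · exact hpos' pq h1
              · have : flat ((h.toNat, q.natAbs) :: pl') =
                    (h.toNat : ℤ) :: (-(q.natAbs : ℤ)) :: flat pl' := by simp [flat]
                rw [this, ← hfl']
                have e1 : (h.toNat : ℤ) = h := by omega
                have e2 : (-(q.natAbs : ℤ)) = q := by omega
                rw [e1, e2]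

lemma conj_rot_gen {k : ℤ} {L L' : List ℤ} (j : ℕ) (hL : rot1^[j] L = L') :
    IsConj (Cbraid ^ k * W L) (Cbraid ^ k * W L') := by
  subst hL; exact rotj_conj k L j

lemma meas_cons (m : ℤ) (L : List ℤ) : meas (m :: L) = 2 * m.natAbs + meas L + 1 := by
  simp [meas]; ring

lemma red : ∀ (n : ℕ) (L : List ℤ) (k : ℤ), meas L ≤ n → NF0 (Cbraid ^ k * W L) := by
  intro n
  induction n with
  | zero =>
      intro L k hlen
      cases L with
      | nil =>
          rw [W_nil, mul_one, show (Cbraid ^ k : BraidGroup3) = Cbraid ^ k * σ₁ ^ (0:ℤ) from by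
            rw [zpow_zero, mul_one]]
          exact fam1_nf k 0
      | cons a t =>
          exfalso
          simp only [meas, List.length_cons] at hlen
          omega
  | succ n ih =>
      intro L k hlen
      by_cases h0 : (0 : ℤ) ∈ L
      · -- L contains a zero
        match L, h0 with
        | [m], h0 =>
          have hm0 : m = 0 := (by simpa using h0 : (0:ℤ) = m).symm
          subst hm0
          exact fam3_nf k
        | (u :: v :: R), h0 =>
          -- rotate zero into second position
          have hrot : ∃ j a B2, rot1^[j] (u :: v :: R) = a :: 0 :: B2 ∧
              meas (a :: 0 :: B2) = meas (u :: v :: R) := by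
            obtain ⟨A, B, hAB⟩ := List.append_of_mem h0
            rcases List.eq_nil_or_concat A with hA | ⟨A', x, hA⟩
            · subst hA
              simp only [List.nil_append] at hAB
              rcases List.eq_nil_or_concat B with hB | ⟨B', x, hB⟩
              · subst hB; simp at hAB
              · rw [List.concat_eq_append] at hB
                subst hB
                obtain ⟨j, hj⟩ := exists_rot (0 :: B') x ([] : List ℤ)
                refine ⟨j, x, B', ?_, ?_⟩
                · rw [hAB, show (0:ℤ) :: (B' ++ [x]) = ((0:ℤ) :: B') ++ x :: [] from by simp, hj]
                  simp
                · simp only [List.nil_append] at hj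
                  rw [hAB, show (0:ℤ) :: (B' ++ [x]) = ((0:ℤ) :: B') ++ x :: [] from by simp,
                    ← hj, meas_rotj]
            · rw [List.concat_eq_append] at hA
              subst hA
              obtain ⟨j, hj⟩ := exists_rot A' x ((0:ℤ) :: B)
              refine ⟨j, x, B ++ A', ?_, ?_⟩
              · rw [hAB, show A' ++ [x] ++ (0:ℤ) :: B = A' ++ x :: ((0:ℤ) :: B) from by simp, hj]
                simp
              · rw [hAB, show A' ++ [x] ++ (0:ℤ) :: B = A' ++ x :: ((0:ℤ) :: B) from by simp,
                  ← meas_rotj (A' ++ x :: ((0:ℤ) :: B)) j, hj]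
                simp
          obtain ⟨j, a, B2, hj, hm⟩ := hrot
          refine nf_conj (conj_rot_gen j hj) ?_
          have hW : Cbraid ^ k * W (a :: 0 :: B2) = Cbraid ^ (k+1) * (σ₁ ^ a * W B2) := by
            rw [W_cons, W_cons, show Dm a * (Dm 0 * W B2) = (Dm a * Dm 0) * W B2 from by group,
              Zmove, zpow_add, zpow_one]
            group
          rw [hW]
          cases B2 with
          | nil => rw [W_nil, mul_one]; exact fam1_nf (k+1) a
          | cons t T' =>
              rw [merge]
              refine ih ((a + t) :: T') (k+1) ?_
              have h1 : meas ((a+t) :: T') ≤ meas (a :: (0:ℤ) :: t :: T') - 2 := by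
                simp only [meas_cons]
                have := Int.natAbs_add_le a t
                omega
              omega
      · -- no zeros
        have hnz : ∀ x ∈ L, x ≠ 0 := fun x hx hc => h0 (hc ▸ hx)
        match L with
        | [] =>
            refine nf_conj (IsConj.refl _) ?_
            rw [W_nil, mul_one, show (Cbraid ^ k : BraidGroup3) = Cbraid ^ k * σ₁ ^ (0:ℤ) from by
              rw [zpow_zero, mul_one]]
            exact fam1_nf k 0
        | [m] =>
            rcases lt_trichotomy m 0 with hm | hm | hm
            · rcases eq_or_lt_of_le (show m ≤ -1 from by omega) with he | he
              · subst he
                exact fam2_nf k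
              · -- m ≤ -2 : M6b
                have hconj : IsConj (Cbraid ^ k * W [m])
                    (Cbraid ^ (k-1) * W [m+2, 1]) := by
                  refine isConj_iff.mpr ⟨σ₁, ?_⟩
                  have hw : W [m] = Dm m := by simp [W]
                  have hw2 : W [m+2, 1] = Dm (m+2) * Dm 1 := by simp [W]
                  rw [hw, hw2]
                  calc σ₁ * (Cbraid ^ k * Dm m) * σ₁⁻¹
                      = Cbraid ^ k * (σ₁ * Dm m * σ₁⁻¹) := by
                        rw [show σ₁ * (Cbraid ^ k * Dm m) * σ₁⁻¹
                            = σ₁ * Cbraid ^ k * (Dm m * σ₁⁻¹) from by group, ← Ck_central]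
                        group
                  _ = Cbraid ^ k * (Cbraid⁻¹ * (Dm (m+2) * Dm 1)) := by rw [M6b]
                  _ = Cbraid ^ (k-1) * (Dm (m+2) * Dm 1) := by
                        rw [zpow_sub, zpow_one]; group
                refine nf_conj hconj (ih [m+2, 1] (k-1) ?_)
                simp only [meas, List.map_cons, List.map_nil, List.sum_cons, List.sum_nil,
                  List.length_cons, List.length_nil] at hlen ⊢
                omega
            · exfalso; exact hnz m (by simp) hm
            · rcases eq_or_lt_of_le (show 1 ≤ m from by omega) with he | he
              · rw [← he]
                exact fam4_nf k
              · -- 2 ≤ m : M6a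
                have hconj : IsConj (Cbraid ^ k * W [m])
                    (Cbraid ^ k * W [m-2, -1]) := by
                  refine isConj_iff.mpr ⟨σ₁⁻¹, ?_⟩
                  have hw : W [m] = Dm m := by simp [W]
                  have hw2 : W [m-2, -1] = Dm (m-2) * Dm (-1) := by simp [W]
                  rw [hw, hw2]
                  calc σ₁⁻¹ * (Cbraid ^ k * Dm m) * σ₁⁻¹⁻¹
                      = Cbraid ^ k * (σ₁⁻¹ * Dm m * σ₁) := by
                        rw [show σ₁⁻¹ * (Cbraid ^ k * Dm m) * σ₁⁻¹⁻¹
                            = σ₁⁻¹ * Cbraid ^ k * (Dm m * σ₁⁻¹⁻¹) from by group, ← Ck_central]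
                        group
                  _ = Cbraid ^ k * (Dm (m-2) * Dm (-1)) := by rw [M6a]
                refine nf_conj hconj (ih [m-2, -1] k ?_)
                simp only [meas, List.map_cons, List.map_nil, List.sum_cons, List.sum_nil,
                  List.length_cons, List.length_nil] at hlen ⊢
                omega
        | (u :: v :: R) =>
            by_cases hss : ∃ j a m T, rot1^[j] (u :: v :: R) = a :: m :: T ∧ 0 < a * m
            · obtain ⟨j, a, m, T, hj, ham⟩ := hss
              refine nf_conj (conj_rot_gen j hj) ?_
              have hmeq : meas (a :: m :: T) = meas (u :: v :: R) := by
                rw [← hj, meas_rotj]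
              rcases lt_trichotomy a 0 with ha | ha | ha
              · -- both negative
                have hm : m < 0 := by nlinarith
                have hW : Cbraid ^ k * W (a :: m :: T)
                    = Cbraid ^ (k-1) * W ((a+1) :: 1 :: (m+1) :: T) := by
                  rw [W_cons, W_cons, show Dm a * (Dm m * W T) = (Dm a * Dm m) * W T from by
                    group, Pminus, W_cons, W_cons, W_cons, zpow_sub, zpow_one]
                  group
                rw [hW]
                refine ih _ (k-1) ?_
                simp only [meas_cons] at hmeq hlen ⊢
                omega
              · exfalso; rw [ha] at ham; simp at ham
              · have hm : 0 < m := by nlinarith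
                have hW : Cbraid ^ k * W (a :: m :: T)
                    = Cbraid ^ k * W ((a-1) :: -1 :: (m-1) :: T) := by
                  rw [W_cons, W_cons, show Dm a * (Dm m * W T) = (Dm a * Dm m) * W T from by
                    group, Pplus, W_cons, W_cons, W_cons]
                  group
                rw [hW]
                refine ih _ k ?_
                simp only [meas_cons] at hmeq hlen ⊢
                omega
            · -- cyclically alternating
              push_neg at hss
              have H : ∀ j a m T, rot1^[j] (u :: v :: R) = a :: m :: T → a * m < 0 := by
                intro j a m T hj
                have h1 := hss j a m T hj
                have ha : a ≠ 0 := hnz a (mem_rotj j (by rw [hj]; simp))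
                have hm : m ≠ 0 := hnz m (mem_rotj j (by rw [hj]; simp))
                exact lt_of_le_of_ne h1 (mul_ne_zero ha hm)
              have huv : u * v < 0 := H 0 u v R rfl
              -- find rotation with positive head
              have hstart : ∃ j₀ x M, rot1^[j₀] (u :: v :: R) = x :: M ∧ 0 < x ∧
                  M.length = R.length + 1 := by
                rcases lt_trichotomy u 0 with hu | hu | hu
                · have hv : 0 < v := pos_of_mul_neg_left' huv hu
                  refine ⟨1, v, R ++ [u], ?_, hv, by simp⟩
                  simp [rot1]
                · exact absurd hu (hnz u (by simp))
                · exact ⟨0, u, v :: R, rfl, hu, by simp⟩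
              obtain ⟨j₀, x, M, hj₀, hx, hMlen⟩ := hstart
              have H' : ∀ j a m T, rot1^[j] (x :: M) = a :: m :: T → a * m < 0 := by
                intro j a m T hj
                refine H (j + j₀) a m T ?_
                rw [Function.iterate_add_apply, hj₀, hj]
              have hadj : ∀ A a m B, x :: M = A ++ a :: m :: B → a * m < 0 := by
                intro A a m B hEq
                obtain ⟨j, hj⟩ := exists_rot A a (m :: B)
                refine H' j a m (B ++ A) ?_
                rw [← hEq] at hj
                rw [hj]
                simp
              have hlast : ∀ y, (x :: M).getLast? = some y → y < 0 := by
                intro y hy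
                rcases List.eq_nil_or_concat M with hM | ⟨M', z, hM⟩
                · subst hM; simp at hMlen
                · rw [List.concat_eq_append] at hM
                  subst hM
                  have hz : (x :: (M' ++ [z])).getLast? = some z := by
                    rw [show x :: (M' ++ [z]) = (x :: M') ++ [z] from by simp]
                    exact List.getLast?_concat
                  have hyz : y = z := by rw [hy] at hz; exact Option.some_inj.mp hz
                  subst hyz
                  obtain ⟨j, hj⟩ := exists_rot (x :: M') y ([] : List ℤ)
                  have := H' j y x M' (by
                    rw [show x :: (M' ++ [y]) = (x :: M') ++ y :: [] from by simp, hj]; simp)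
                  nlinarith
              obtain ⟨pl, hplne, hplpos, hfl⟩ := ALT (x :: M).length (x :: M) le_rfl x M rfl
                hx hadj hlast
              refine nf_conj (conj_rot_gen j₀ hj₀) ?_
              rw [hfl]
              exact fam0_nf k pl hplne hplpos

/-- initial decomposition form -/
def InitForm (b : BraidGroup3) : Prop :=
  ∃ (k : ℤ) (L : List ℤ) (n : ℤ), b = Cbraid ^ k * W L * σ₁ ^ n

lemma init_mul {b b' : BraidGroup3} (h : InitForm b) (h' : InitForm b') : InitForm (b * b') := by
  obtain ⟨k, L, n, rfl⟩ := h
  obtain ⟨k', L', n', rfl⟩ := h'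
  cases L' with
  | nil =>
      refine ⟨k + k', L, n + n', ?_⟩
      rw [W_nil, zpow_add, zpow_add]
      rw [show Cbraid ^ k * W L * σ₁ ^ n * (Cbraid ^ k' * 1 * σ₁ ^ n')
          = Cbraid ^ k * ((W L * σ₁ ^ n) * Cbraid ^ k') * σ₁ ^ n' from by group, ← Ck_central]
      group
  | cons m T =>
      refine ⟨k + k', L ++ (n + m) :: T, n', ?_⟩
      rw [W_append, ← merge, zpow_add]
      rw [show Cbraid ^ k * W L * σ₁ ^ n * (Cbraid ^ k' * W (m :: T) * σ₁ ^ n')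
          = Cbraid ^ k * ((W L * σ₁ ^ n) * Cbraid ^ k') * (W (m :: T) * σ₁ ^ n') from by group,
        ← Ck_central]
      group

lemma sigma2_eq : σ₂ = Cbraid ^ (-1 : ℤ) * W [0, 1] * σ₁ ^ (0 : ℤ) := by
  have hW : W [0, 1] = Δ * (σ₁ * Δ) := by
    simp [W, Dm, List.prod_cons]
  rw [hW, zpow_zero, mul_one, zpow_neg, zpow_one, h1C]
  group

lemma sigma2_inv_eq : σ₂⁻¹ = Cbraid ^ (-1 : ℤ) * W [0, -1] * σ₁ ^ (0 : ℤ) := by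
  have hW : W [0, -1] = Δ * (σ₁⁻¹ * Δ) := by
    simp [W, Dm, List.prod_cons]
  rw [hW, zpow_zero, mul_one, zpow_neg, zpow_one]
  refine inv_eq_of_mul_eq_one_right ?_
  calc σ₂ * (Cbraid⁻¹ * (Δ * (σ₁⁻¹ * Δ)))
      = Cbraid⁻¹ * (Δ * σ₁ * Δ) * (Cbraid⁻¹ * (Δ * (σ₁⁻¹ * Δ))) := by rw [← h1C]
  _ = Cbraid⁻¹ * Cbraid⁻¹ * (Δ * σ₁ * (Δ * Δ) * σ₁⁻¹ * Δ) := by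
        rw [show Cbraid⁻¹ * (Δ * σ₁ * Δ) * (Cbraid⁻¹ * (Δ * (σ₁⁻¹ * Δ)))
            = Cbraid⁻¹ * ((Δ * σ₁ * Δ) * Cbraid⁻¹) * (Δ * (σ₁⁻¹ * Δ)) from by group,
          ← Cinv_central]
        group
  _ = Cbraid⁻¹ * Cbraid⁻¹ * (Δ * σ₁ * Cbraid * σ₁⁻¹ * Δ) := by rw [hD2]
  _ = Cbraid⁻¹ * Cbraid⁻¹ * Cbraid * (Δ * σ₁ * σ₁⁻¹ * Δ) := by
        rw [show Δ * σ₁ * Cbraid * σ₁⁻¹ * Δ = Δ * σ₁ * Cbraid * (σ₁⁻¹ * Δ) from by group,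
          show (Δ * σ₁ * Cbraid) = (Δ * σ₁) * Cbraid from by group, ← Cb_central]
        group
  _ = Cbraid⁻¹ * Cbraid⁻¹ * Cbraid * (Δ * Δ) := by group
  _ = 1 := by rw [hD2]; group

lemma init_all (b : BraidGroup3) : InitForm b := by
  obtain ⟨w, rfl⟩ := PresentedGroup.mk_surjective braidRels b
  induction w using FreeGroup.induction_on with
  | C1 => exact ⟨0, [], 0, by simp [W_nil]⟩
  | of x =>
      fin_cases x
      · exact ⟨0, [], 1, by simp [W_nil]; rfl⟩
      · exact ⟨-1, [0, 1], 0, by rw [← sigma2_eq]; rfl⟩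
  | inv_of x _ =>
      fin_cases x
      · exact ⟨0, [], -1, by simp [W_nil]; rfl⟩
      · exact ⟨-1, [0, -1], 0, by rw [← sigma2_inv_eq]; rfl⟩
  | mul x y ihx ihy =>
      rw [map_mul]
      exact init_mul ihx ihy

lemma nf_all (b : BraidGroup3) : NF0 b := by
  obtain ⟨k, L, n, rfl⟩ := init_all b
  cases L with
  | nil =>
      rw [W_nil, mul_one]
      exact fam1_nf k n
  | cons m T =>
      have hc : IsConj (Cbraid ^ k * W (m :: T) * σ₁ ^ n)
          (Cbraid ^ k * W ((n + m) :: T)) := by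
        rw [← merge]
        have := conj_cyc k (W (m :: T)) (σ₁ ^ n)
        rw [show Cbraid ^ k * W (m :: T) * σ₁ ^ n = Cbraid ^ k * (W (m :: T) * σ₁ ^ n) from by
          group]
        exact this
      exact nf_conj hc (red (meas ((n + m) :: T)) _ k le_rfl)

/-! ## Uniqueness: invariants via SL(2,ℤ) and exponent sum -/

abbrev SL2 := Matrix.SpecialLinearGroup (Fin 2) ℤ

def Amat : SL2 := ⟨!![1,1;0,1], by simp [Matrix.det_fin_two_of]⟩
def Bmat : SL2 := ⟨!![1,0;-1,1], by simp [Matrix.det_fin_two_of]⟩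

lemma ABArel : Amat * Bmat * Amat = Bmat * Amat * Bmat := by
  apply Subtype.ext
  simp only [Matrix.SpecialLinearGroup.coe_mul]; simp only [Amat, Bmat]
  ext i j
  fin_cases i <;> fin_cases j <;> simp [Matrix.mul_apply, Fin.sum_univ_two]

lemma hrelφ : ∀ r ∈ braidRels, (FreeGroup.lift ![Amat, Bmat]) r = 1 := by
  intro r hr
  rw [Set.mem_singleton_iff.mp hr]
  simp only [map_mul, map_inv, FreeGroup.lift_apply_of]
  rw [mul_inv_eq_one]
  simpa using ABArel

noncomputable def φb : BraidGroup3 →* SL2 := PresentedGroup.toGroup hrelφ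

lemma φs1 : φb σ₁ = Amat := by
  rw [σ₁, φb, PresentedGroup.toGroup.of]; simp

lemma φs2 : φb σ₂ = Bmat := by
  rw [σ₂, φb, PresentedGroup.toGroup.of]; simp

lemma hrelε : ∀ r ∈ braidRels,
    (FreeGroup.lift ![Multiplicative.ofAdd (1:ℤ), Multiplicative.ofAdd (1:ℤ)]) r = 1 := by
  intro r hr
  rw [Set.mem_singleton_iff.mp hr]
  simp only [map_mul, map_inv, FreeGroup.lift_apply_of, Matrix.cons_val_zero, Matrix.cons_val_one,
    Matrix.head_cons]
  group

noncomputable def εh : BraidGroup3 →* Multiplicative ℤ := PresentedGroup.toGroup hrelε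

noncomputable def εb (b : BraidGroup3) : ℤ := Multiplicative.toAdd (εh b)

lemma εs1 : εb σ₁ = 1 := by
  rw [εb, σ₁, εh, PresentedGroup.toGroup.of]; simp

lemma εs2 : εb σ₂ = 1 := by
  rw [εb, σ₂, εh, PresentedGroup.toGroup.of]; simp

lemma εb_mul (x y : BraidGroup3) : εb (x * y) = εb x + εb y := by
  rw [εb, map_mul]; simp [εb]

lemma εb_C : εb Cbraid = 6 := by
  rw [Cbraid, εb, map_pow, map_mul]
  rw [show (εh σ₁) = Multiplicative.ofAdd (1:ℤ) from by rw [εh, σ₁, PresentedGroup.toGroup.of]; simp,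
      show (εh σ₂) = Multiplicative.ofAdd (1:ℤ) from by rw [εh, σ₂, PresentedGroup.toGroup.of]; simp]
  simp [← ofAdd_add]

lemma εb_Ck (k : ℤ) (x : BraidGroup3) : εb (Cbraid ^ k * x) = 6 * k + εb x := by
  rw [εb_mul]
  congr 1
  rw [εb, map_zpow]
  rw [show (εh Cbraid) = Multiplicative.ofAdd (6:ℤ) from by
    have := εb_C; rw [εb] at this; exact Multiplicative.toAdd.injective (by simpa using this)]
  simp [toAdd_zpow]
  ring

/-- the trace-squared invariant -/
noncomputable def tsq (b : BraidGroup3) : ℤ :=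
  (Matrix.trace ((φb b : SL2) : Matrix (Fin 2) (Fin 2) ℤ))^2

lemma tsq_conj {b c : BraidGroup3} (h : IsConj b c) : tsq b = tsq c := by
  obtain ⟨g, hg⟩ := isConj_iff.mp (φb.map_isConj h)
  rw [tsq, tsq, ← hg]
  congr 1
  rw [show ((g * φb b * g⁻¹ : SL2) : Matrix (Fin 2) (Fin 2) ℤ)
      = (g : Matrix (Fin 2) (Fin 2) ℤ) * (φb b : Matrix (Fin 2) (Fin 2) ℤ)
        * ((g⁻¹ : SL2) : Matrix (Fin 2) (Fin 2) ℤ) from by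
    rw [Matrix.SpecialLinearGroup.coe_mul, Matrix.SpecialLinearGroup.coe_mul]]
  rw [Matrix.trace_mul_cycle]
  rw [show ((g⁻¹ : SL2) : Matrix (Fin 2) (Fin 2) ℤ) * (g : Matrix (Fin 2) (Fin 2) ℤ)
      = 1 from by rw [← Matrix.SpecialLinearGroup.coe_mul, inv_mul_cancel]; rfl]
  rw [one_mul]

lemma εb_conj {b c : BraidGroup3} (h : IsConj b c) : εb b = εb c := by
  have := εh.map_isConj h
  rw [isConj_iff_eq] at this
  rw [εb, εb, this]

lemma φC_val : ((φb Cbraid : SL2) : Matrix (Fin 2) (Fin 2) ℤ) = !![-1,0;0,-1] := by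
  rw [Cbraid, map_pow, map_mul, φs1, φs2]
  rw [Matrix.SpecialLinearGroup.coe_pow, Matrix.SpecialLinearGroup.coe_mul]
  show ((Amat : Matrix (Fin 2) (Fin 2) ℤ) * Bmat)^3 = _
  rw [pow_succ, pow_succ, pow_one]
  simp only [Amat, Bmat]
  ext i j
  fin_cases i <;> fin_cases j <;> simp [Matrix.mul_apply, Fin.sum_univ_two]

lemma φC_sq : φb Cbraid * φb Cbraid = 1 := by
  apply Subtype.ext
  rw [Matrix.SpecialLinearGroup.coe_mul, φC_val]
  ext i j
  fin_cases i <;> fin_cases j <;> simp [Matrix.mul_apply, Fin.sum_univ_two]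

lemma tsq_Ck (k : ℤ) (x : BraidGroup3) : tsq (Cbraid ^ k * x) = tsq x := by
  rw [tsq, tsq, map_mul, map_zpow]
  rcases Int.even_or_odd k with ⟨m, hm⟩ | ⟨m, hm⟩
  · have h1 : (φb Cbraid) ^ k = 1 := by
      rw [hm, show m + m = 2 * m from by ring, zpow_mul]
      rw [zpow_two, φC_sq, one_zpow]
    rw [h1, one_mul]
  · have h1 : (φb Cbraid) ^ k = φb Cbraid := by
      rw [hm, zpow_add, zpow_mul]
      rw [zpow_two, φC_sq, one_zpow,
        one_mul, zpow_one]
    rw [h1]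
    rw [show ((φb Cbraid * φb x : SL2) : Matrix (Fin 2) (Fin 2) ℤ)
        = ((φb Cbraid : SL2) : Matrix (Fin 2) (Fin 2) ℤ) * φb x from
      Matrix.SpecialLinearGroup.coe_mul _ _]
    rw [φC_val, show (!![-1,0;0,-1] : Matrix (Fin 2) (Fin 2) ℤ) = -1 from by
      ext i j; fin_cases i <;> fin_cases j <;> simp]
    rw [neg_one_mul, Matrix.trace_neg]
    ring

lemma Ainv_eq : Amat⁻¹ = (⟨!![1,-1;0,1], by simp [Matrix.det_fin_two_of]⟩ : SL2) := by
  refine inv_eq_of_mul_eq_one_right ?_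
  apply Subtype.ext
  erw [Matrix.SpecialLinearGroup.coe_mul]
  show (Amat : Matrix (Fin 2) (Fin 2) ℤ) * !![1,-1;0,1] = 1
  simp only [Amat]
  ext i j
  fin_cases i <;> fin_cases j <;> simp [Matrix.mul_apply, Fin.sum_univ_two]

lemma Binv_eq : Bmat⁻¹ = (⟨!![1,0;1,1], by simp [Matrix.det_fin_two_of]⟩ : SL2) := by
  refine inv_eq_of_mul_eq_one_right ?_
  apply Subtype.ext
  erw [Matrix.SpecialLinearGroup.coe_mul]
  show (Bmat : Matrix (Fin 2) (Fin 2) ℤ) * !![1,0;1,1] = 1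
  simp only [Bmat]
  ext i j
  fin_cases i <;> fin_cases j <;> simp [Matrix.mul_apply, Fin.sum_univ_two]

lemma Az (p : ℤ) : ((Amat ^ p : SL2) : Matrix (Fin 2) (Fin 2) ℤ) = !![1,p;0,1] := by
  induction p using Int.induction_on with
  | zero => rw [zpow_zero]; ext i j; fin_cases i <;> fin_cases j <;> simp
  | succ n ihn =>
      rw [zpow_add_one, Matrix.SpecialLinearGroup.coe_mul, ihn]
      show _ * (Amat : Matrix (Fin 2) (Fin 2) ℤ) = _
      simp only [Amat]
      ext i j
      fin_cases i <;> fin_cases j <;> simp [Matrix.mul_apply, Fin.sum_univ_two] <;> ring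
  | pred n ihn =>
      rw [zpow_sub_one, Matrix.SpecialLinearGroup.coe_mul, ihn, Ainv_eq]
      show _ * (!![1,-1;0,1] : Matrix (Fin 2) (Fin 2) ℤ) = _
      ext i j
      fin_cases i <;> fin_cases j <;> simp [Matrix.mul_apply, Fin.sum_univ_two] <;> ring

lemma Bz (m : ℤ) : ((Bmat ^ m : SL2) : Matrix (Fin 2) (Fin 2) ℤ) = !![1,0;-m,1] := by
  induction m using Int.induction_on with
  | zero => rw [zpow_zero]; ext i j; fin_cases i <;> fin_cases j <;> simp
  | succ n ihn =>
      rw [zpow_add_one, Matrix.SpecialLinearGroup.coe_mul, ihn]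
      show _ * (Bmat : Matrix (Fin 2) (Fin 2) ℤ) = _
      simp only [Bmat]
      ext i j
      fin_cases i <;> fin_cases j <;> simp [Matrix.mul_apply, Fin.sum_univ_two] <;> ring
  | pred n ihn =>
      rw [zpow_sub_one, Matrix.SpecialLinearGroup.coe_mul, ihn, Binv_eq]
      show _ * (!![1,0;1,1] : Matrix (Fin 2) (Fin 2) ℤ) = _
      ext i j
      fin_cases i <;> fin_cases j <;> simp [Matrix.mul_apply, Fin.sum_univ_two] <;> ring

lemma tsq1 (k p : ℤ) : tsq (Cbraid ^ k * σ₁ ^ p) = 4 := by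
  rw [tsq_Ck, tsq, map_zpow, φs1, Az, Matrix.trace_fin_two]
  norm_num

lemma tsq2 (k : ℤ) : tsq (Cbraid ^ k * (σ₁ * σ₂)) = 1 := by
  rw [tsq_Ck, tsq, map_mul, φs1, φs2, Matrix.SpecialLinearGroup.coe_mul]
  show ((Amat : Matrix (Fin 2) (Fin 2) ℤ) * Bmat).trace ^ 2 = 1
  simp only [Amat, Bmat]
  rw [Matrix.trace_fin_two]
  simp [Matrix.mul_apply, Fin.sum_univ_two]

lemma tsq3 (k : ℤ) : tsq (Cbraid ^ k * (σ₁ * σ₂ * σ₁)) = 0 := by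
  rw [tsq_Ck, tsq, map_mul, map_mul, φs1, φs2, Matrix.SpecialLinearGroup.coe_mul,
    Matrix.SpecialLinearGroup.coe_mul]
  show (((Amat : Matrix (Fin 2) (Fin 2) ℤ) * Bmat) * Amat).trace ^ 2 = 0
  simp only [Amat, Bmat]
  rw [Matrix.trace_fin_two]
  simp [Matrix.mul_apply, Fin.sum_univ_two]

lemma tsq4 (k : ℤ) : tsq (Cbraid ^ k * (σ₁ * σ₂ * σ₁ * σ₂)) = 1 := by
  rw [tsq_Ck, tsq, map_mul, map_mul, map_mul, φs1, φs2, Matrix.SpecialLinearGroup.coe_mul,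
    Matrix.SpecialLinearGroup.coe_mul, Matrix.SpecialLinearGroup.coe_mul]
  show ((((Amat : Matrix (Fin 2) (Fin 2) ℤ) * Bmat) * Amat) * Bmat).trace ^ 2 = 1
  simp only [Amat, Bmat]
  rw [Matrix.trace_fin_two]
  simp [Matrix.mul_apply, Fin.sum_univ_two]

def PosM (M : Matrix (Fin 2) (Fin 2) ℤ) : Prop :=
  2 ≤ M 0 0 ∧ 1 ≤ M 0 1 ∧ 1 ≤ M 1 0 ∧ 1 ≤ M 1 1

lemma PosM_mul {M N : Matrix (Fin 2) (Fin 2) ℤ} (hM : PosM M) (hN : PosM N) : PosM (M * N) := by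
  obtain ⟨h1, h2, h3, h4⟩ := hM
  obtain ⟨g1, g2, g3, g4⟩ := hN
  refine ⟨?_, ?_, ?_, ?_⟩ <;> simp only [Matrix.mul_apply, Fin.sum_univ_two] <;> nlinarith

lemma factor_posM (p q : ℕ) (hp : 0 < p) (hq : 0 < q) :
    PosM ((φb (σ₁ ^ p * σ₂ ^ (-(q:ℤ))) : SL2) : Matrix (Fin 2) (Fin 2) ℤ) := by
  rw [map_mul, map_pow, map_zpow, φs1, φs2, Matrix.SpecialLinearGroup.coe_mul]
  have hA : ((Amat ^ p : SL2) : Matrix (Fin 2) (Fin 2) ℤ) = !![1,(p:ℤ);0,1] := by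
    rw [← zpow_natCast, Az]
  have hB : ((Bmat ^ (-(q:ℤ)) : SL2) : Matrix (Fin 2) (Fin 2) ℤ) = !![1,0;(q:ℤ),1] := by
    rw [Bz]; norm_num
  rw [hA, hB]
  have hp' : 1 ≤ (p:ℤ) := by exact_mod_cast hp
  have hq' : 1 ≤ (q:ℤ) := by exact_mod_cast hq
  refine ⟨?_, ?_, ?_, ?_⟩ <;> simp [Matrix.mul_apply, Fin.sum_univ_two] <;> nlinarith

lemma prod_posM : ∀ (s : ℕ) (p q : ℕ → ℕ), 0 < s → (∀ i < s, 0 < p i ∧ 0 < q i) →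
    PosM ((φb (((List.range s).map (fun i => σ₁ ^ (p i) * σ₂ ^ (-(q i : ℤ)))).prod) : SL2)
      : Matrix (Fin 2) (Fin 2) ℤ) := by
  intro s
  induction s with
  | zero => intro p q hs; omega
  | succ s ihs =>
      intro p q _ hpq
      rw [List.range_succ, List.map_append, List.prod_append]
      rcases Nat.eq_zero_or_pos s with hs | hs
      · subst hs
        simp only [List.range_zero, List.map_nil, List.prod_nil, one_mul, List.map_cons,
          List.prod_cons, List.map_nil, List.prod_nil, mul_one]
        exact factor_posM _ _ (hpq 0 (by omega)).1 (hpq 0 (by omega)).2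
      · rw [map_mul, Matrix.SpecialLinearGroup.coe_mul]
        refine PosM_mul (ihs p q hs (fun i hi => hpq i (by omega))) ?_
        simp only [List.map_cons, List.prod_cons, List.map_nil, List.prod_nil, mul_one]
        exact factor_posM _ _ (hpq s (by omega)).1 (hpq s (by omega)).2

lemma tsq0 {c : BraidGroup3} (h : SchreierForm 0 c) : 9 ≤ tsq c := by
  obtain ⟨k, s, p, q, hs, hpq, rfl⟩ := h
  rw [tsq_Ck, tsq]
  obtain ⟨h1, _, _, h4⟩ := prod_posM s p q hs hpq
  rw [Matrix.trace_fin_two]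
  nlinarith

lemma eps2 (k : ℤ) : εb (Cbraid ^ k * (σ₁ * σ₂)) = 6 * k + 2 := by
  rw [εb_Ck, εb_mul, εs1, εs2]
  ring

lemma eps4 (k : ℤ) : εb (Cbraid ^ k * (σ₁ * σ₂ * σ₁ * σ₂)) = 6 * k + 4 := by
  rw [εb_Ck, εb_mul, εb_mul, εb_mul, εs1, εs2]
  ring

lemma stats (i : Fin 5) (c : BraidGroup3) (h : SchreierForm i c) :
    (i = 0 ∧ 9 ≤ tsq c) ∨ (i = 1 ∧ tsq c = 4) ∨ (i = 2 ∧ tsq c = 1 ∧ εb c % 6 = 2) ∨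
    (i = 3 ∧ tsq c = 0) ∨ (i = 4 ∧ tsq c = 1 ∧ εb c % 6 = 4) := by
  fin_cases i
  · exact Or.inl ⟨rfl, tsq0 h⟩
  · obtain ⟨k, p, rfl⟩ := h
    exact Or.inr (Or.inl ⟨rfl, tsq1 k p⟩)
  · obtain ⟨k, rfl⟩ := h
    refine Or.inr (Or.inr (Or.inl ⟨rfl, tsq2 k, ?_⟩))
    rw [eps2]; omega
  · obtain ⟨k, rfl⟩ := h
    exact Or.inr (Or.inr (Or.inr (Or.inl ⟨rfl, tsq3 k⟩)))
  · obtain ⟨k, rfl⟩ := h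
    refine Or.inr (Or.inr (Or.inr (Or.inr ⟨rfl, tsq4 k, ?_⟩)))
    rw [eps4]; omega

theorem stmt_10 (b : BraidGroup3) :
    ∃! i : Fin 5, ∃ c : BraidGroup3, SchreierForm i c ∧ IsConj b c := by
  obtain ⟨i, c, hc, hconj⟩ := nf_all b
  refine ⟨i, ⟨c, hc, hconj⟩, ?_⟩
  rintro j ⟨c', hc', hconj'⟩
  have hcc : IsConj c' c := hconj'.symm.trans hconj
  have ht : tsq c' = tsq c := tsq_conj hcc
  have he : εb c' = εb c := εb_conj hcc
  rcases stats i c hc with ⟨hi, h1⟩|⟨hi, h1⟩|⟨hi, h1, h2⟩|⟨hi, h1⟩|⟨hi, h1, h2⟩ <;>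
    rcases stats j c' hc' with ⟨hj, g1⟩|⟨hj, g1⟩|⟨hj, g1, g2⟩|⟨hj, g1⟩|⟨hj, g1, g2⟩ <;>
    subst hi <;> subst hj <;> first | rfl | (exfalso; omega)
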